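/- Let (Y, ℬ) be a measurable space, (T_j)_{j≥1} measurable maps of Y to itself, and (μ_j)_{j≥0} Borel probability measures on Y with (T_{j+1})_* μ_j = μ_{j+1} for every j ≥ 0. Let U ⊆ Y be measurable with μ_0(U) > 0, write R(x) := inf{ k ≥ 1 : (T_k ∘ ⋯ ∘ T_1)(x) ∈ U } and c(U) := sup_{k≥0} | μ_0(R > k | U) − μ_0(R > k) |, where μ_0(A|U) := μ_0(A ∩ U)/μ_0(U). Let λ be the finite signed measure λ(A) := μ_0(A ∩ U) − μ_0(U) μ_0(A). Then for every N ≥ 1: (i) c(U) ≤ μ_0(R ≤ N | U) + μ_0(R ≤ N) + (1/μ_0(U)) ‖(T_N ∘ ⋯ ∘ T_1)_* λ‖, where ‖·‖ is the total variation norm of a signed measure; (ii) μ_0(R ≤ N | U) ≤ μ_0(R ≤ N)/μ_0(U); and (iii) μ_0(R ≤ N) ≤ Σ_{i=1}^{N} μ_i(U). -/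

import Mathlib

open MeasureTheory Filter Set Topology

noncomputable section

variable {Y : Type*}

/-- The composition `T_k ∘ ⋯ ∘ T_1` of a sequence of maps. -/
def seqComp (T : ℕ → Y → Y) : ℕ → Y → Y
  | 0 => id
  | k + 1 => T (k + 1) ∘ seqComp T k

/-- The event `{R > k}`: the orbit does not enter `U` within the first `k` steps. -/
def surv (T : ℕ → Y → Y) (U : Set Y) (k : ℕ) : Set Y :=
  {x | ∀ i, 1 ≤ i → i ≤ k → seqComp T i x ∉ U}

/-- The event `{R ≤ N}`: the orbit enters `U` within the first `N` steps. -/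
def hitBy (T : ℕ → Y → Y) (U : Set Y) (N : ℕ) : Set Y :=
  {x | ∃ i, 1 ≤ i ∧ i ≤ N ∧ seqComp T i x ∈ U}


lemma seqComp_measurable [MeasurableSpace Y] {T : ℕ → Y → Y} (hT : ∀ j, Measurable (T j)) :
    ∀ n, Measurable (seqComp T n)
  | 0 => measurable_id
  | n + 1 => (hT (n + 1)).comp (seqComp_measurable hT n)

lemma seqComp_add (T : ℕ → Y → Y) (N : ℕ) :
    ∀ m, seqComp T (N + m) = seqComp (fun i => T (N + i)) m ∘ seqComp T N
  | 0 => rfl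
  | m + 1 => by
    show T (N + m + 1) ∘ seqComp T (N + m) = _
    rw [seqComp_add T N m]
    rfl

lemma hitBy_eq (T : ℕ → Y → Y) (U : Set Y) (N : ℕ) :
    hitBy T U N = ⋃ i ∈ Finset.Icc 1 N, (seqComp T i) ⁻¹' U := by
  ext x; simp [hitBy, and_assoc]

lemma surv_eq (T : ℕ → Y → Y) (U : Set Y) (k : ℕ) :
    surv T U k = ⋂ i ∈ Finset.Icc 1 k, (seqComp T i) ⁻¹' Uᶜ := by
  ext x; simp [surv, and_imp]

lemma compl_surv (T : ℕ → Y → Y) (U : Set Y) (k : ℕ) :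
    (surv T U k)ᶜ = hitBy T U k := by
  ext x
  simp only [surv, hitBy, mem_compl_iff, mem_setOf_eq, not_forall]
  constructor
  · rintro ⟨i, h1, h2, h3⟩; exact ⟨i, h1, h2, not_not.mp h3⟩
  · rintro ⟨i, h1, h2, h3⟩; exact ⟨i, h1, h2, not_not.mpr h3⟩

lemma surv_measurable [MeasurableSpace Y] {T : ℕ → Y → Y} (hT : ∀ j, Measurable (T j))
    {U : Set Y} (hU : MeasurableSet U) (k : ℕ) : MeasurableSet (surv T U k) := by
  rw [surv_eq]
  exact Finset.measurableSet_biInter _ fun i _ => (seqComp_measurable hT i) hU.compl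

lemma hitBy_measurable [MeasurableSpace Y] {T : ℕ → Y → Y} (hT : ∀ j, Measurable (T j))
    {U : Set Y} (hU : MeasurableSet U) (N : ℕ) : MeasurableSet (hitBy T U N) := by
  rw [hitBy_eq]
  exact Finset.measurableSet_biUnion _ fun i _ => (seqComp_measurable hT i) hU

lemma abs_apply_le_tv [MeasurableSpace Y] (s : SignedMeasure Y) {A : Set Y}
    (hA : MeasurableSet A) : |s A| ≤ (s.totalVariation Set.univ).toReal := by
  have hspec := s.toSignedMeasure_toJordanDecomposition
  set J := s.toJordanDecomposition
  have : s A = (J.posPart A).toReal - (J.negPart A).toReal := by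
    conv_lhs => rw [← hspec]
    rw [JordanDecomposition.toSignedMeasure, VectorMeasure.sub_apply,
      Measure.toSignedMeasure_apply_measurable hA, Measure.toSignedMeasure_apply_measurable hA]
    rfl
  rw [this]
  have hfin : IsFiniteMeasure s.totalVariation := by
    unfold SignedMeasure.totalVariation; infer_instance
  have h1 : (J.posPart A).toReal ≤ (s.totalVariation Set.univ).toReal := by
    apply ENNReal.toReal_mono (measure_ne_top _ _)
    exact le_trans (measure_mono (subset_univ A)) (by
      simp [SignedMeasure.totalVariation, Measure.add_apply, le_add_right]; exact le_self_add)
  have h2 : (J.negPart A).toReal ≤ (s.totalVariation Set.univ).toReal := by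
    apply ENNReal.toReal_mono (measure_ne_top _ _)
    exact le_trans (measure_mono (subset_univ A)) (by
      simp [SignedMeasure.totalVariation, Measure.add_apply, le_add_left]; exact le_add_self)
  have p1 : 0 ≤ (J.posPart A).toReal := ENNReal.toReal_nonneg
  have p2 : 0 ≤ (J.negPart A).toReal := ENNReal.toReal_nonneg
  rw [abs_sub_le_iff]
  constructor <;> linarith

theorem stmt1 [MeasurableSpace Y]
    (T : ℕ → Y → Y) (hT : ∀ j, Measurable (T j))
    (μ : ℕ → Measure Y) [hprob : ∀ j, IsProbabilityMeasure (μ j)]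
    (hequiv : ∀ j : ℕ, (μ j).map (T (j + 1)) = μ (j + 1))
    (U : Set Y) (hU : MeasurableSet U) (hUpos : 0 < μ 0 U)
    (cU : ℝ)
    (hcU : cU = ⨆ k : ℕ,
      |(μ 0 (surv T U k ∩ U)).toReal / (μ 0 U).toReal - (μ 0 (surv T U k)).toReal|)
    (lam : SignedMeasure Y)
    (hlam : lam = ((μ 0).restrict U).toSignedMeasure -
      (μ 0 U).toReal • (μ 0).toSignedMeasure) :
    ∀ N : ℕ, 1 ≤ N →
      (cU ≤ (μ 0 (hitBy T U N ∩ U)).toReal / (μ 0 U).toReal + (μ 0 (hitBy T U N)).toReal +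
        (1 / (μ 0 U).toReal) * ((SignedMeasure.totalVariation (lam.map (seqComp T N))) Set.univ).toReal) ∧
      ((μ 0 (hitBy T U N ∩ U)).toReal / (μ 0 U).toReal ≤
        (μ 0 (hitBy T U N)).toReal / (μ 0 U).toReal) ∧
      ((μ 0 (hitBy T U N)).toReal ≤ ∑ i ∈ Finset.Icc 1 N, (μ i U).toReal) := by
  intro N hN
  have hu : 0 < (μ 0 U).toReal :=
    ENNReal.toReal_pos hUpos.ne' (measure_ne_top _ _)
  set u := (μ 0 U).toReal with hudef
  -- map of μ 0 under seqComp
  have hmap : ∀ i, (μ 0).map (seqComp T i) = μ i := by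
    intro i
    induction i with
    | zero => show (μ 0).map id = μ 0; simp
    | succ n ih =>
      have h1 : seqComp T (n + 1) = T (n + 1) ∘ seqComp T n := rfl
      rw [h1, ← Measure.map_map (hT (n + 1)) (seqComp_measurable hT n), ih, hequiv n]
  -- lam applied to a measurable set
  have hlamapp : ∀ A : Set Y, MeasurableSet A →
      lam A = (μ 0 (A ∩ U)).toReal - u * (μ 0 A).toReal := by
    intro A hA
    rw [hlam, VectorMeasure.sub_apply, VectorMeasure.smul_apply,
      Measure.toSignedMeasure_apply_measurable hA,
      Measure.toSignedMeasure_apply_measurable hA, Measure.real, Measure.real, Measure.restrict_apply hA,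
      smul_eq_mul]
  refine ⟨?_, ?_, ?_⟩
  · -- part (i)
    rw [hcU]
    apply ciSup_le
    intro k
    set T' : ℕ → Y → Y := fun i => T (N + i) with hT'def
    have hT' : ∀ j, Measurable (T' j) := fun j => hT (N + j)
    set m := k - N with hmdef
    set S := surv T' U m with hSdef
    have hSmeas : MeasurableSet S := surv_measurable hT' hU m
    set B := (seqComp T N) ⁻¹' S with hBdef
    have hBmeas : MeasurableSet B := (seqComp_measurable hT N) hSmeas
    have hcomp : ∀ j x, seqComp T' j (seqComp T N x) = seqComp T (N + j) x := by
      intro j x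
      rw [seqComp_add T N j]; rfl
    have hsub1 : surv T U k ⊆ B := by
      intro x hx i hi1 him
      rw [hcomp i x]
      exact hx (N + i) (by omega) (by omega)
    have hsub2 : B ⊆ surv T U k ∪ hitBy T U N := by
      intro x hxB
      by_cases h : x ∈ surv T U k
      · exact Or.inl h
      · refine Or.inr ?_
        simp only [surv, mem_setOf_eq, not_forall] at h
        obtain ⟨i, hi1, hik, hiU⟩ := h
        rw [not_not] at hiU
        by_cases hiN : i ≤ N
        · exact ⟨i, hi1, hiN, hiU⟩
        · exfalso
          have hj : seqComp T' (i - N) (seqComp T N x) ∉ U :=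
            hxB (i - N) (by omega) (by omega)
          rw [hcomp (i - N) x] at hj
          have : N + (i - N) = i := by omega
          rw [this] at hj
          exact hj hiU
    -- real numbers
    set pk := (μ 0 (surv T U k ∩ U)).toReal
    set qk := (μ 0 (surv T U k)).toReal
    set pB := (μ 0 (B ∩ U)).toReal
    set qB := (μ 0 B).toReal
    set a := (μ 0 (hitBy T U N ∩ U)).toReal
    set b := (μ 0 (hitBy T U N)).toReal
    set V := ((SignedMeasure.totalVariation (lam.map (seqComp T N))) Set.univ).toReal with hVdef
    have h1 : pk ≤ pB :=
      ENNReal.toReal_mono (measure_ne_top _ _)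
        (measure_mono (inter_subset_inter_left U hsub1))
    have h2 : pB ≤ pk + a := by
      have hle : μ 0 (B ∩ U) ≤ μ 0 (surv T U k ∩ U) + μ 0 (hitBy T U N ∩ U) := by
        refine le_trans (measure_mono ?_) (measure_union_le _ _)
        rw [← union_inter_distrib_right]
        exact inter_subset_inter_left U hsub2
      calc pB ≤ (μ 0 (surv T U k ∩ U) + μ 0 (hitBy T U N ∩ U)).toReal :=
            ENNReal.toReal_mono (by finiteness) hle
        _ = pk + a := ENNReal.toReal_add (measure_ne_top _ _) (measure_ne_top _ _)
    have h3 : qk ≤ qB :=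
      ENNReal.toReal_mono (measure_ne_top _ _) (measure_mono hsub1)
    have h4 : qB ≤ qk + b := by
      have hle : μ 0 B ≤ μ 0 (surv T U k) + μ 0 (hitBy T U N) :=
        le_trans (measure_mono hsub2) (measure_union_le _ _)
      calc qB ≤ (μ 0 (surv T U k) + μ 0 (hitBy T U N)).toReal :=
            ENNReal.toReal_mono (by finiteness) hle
        _ = qk + b := ENNReal.toReal_add (measure_ne_top _ _) (measure_ne_top _ _)
    have hlamB : lam B = pB - u * qB := hlamapp B hBmeas
    have hmapS : (lam.map (seqComp T N)) S = lam B := by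
      rw [VectorMeasure.map_apply _ (seqComp_measurable hT N) hSmeas]
    have hV : |pB - u * qB| ≤ V := by
      rw [← hlamB, ← hmapS]
      exact abs_apply_le_tv _ hSmeas
    have hbnn : 0 ≤ b := ENNReal.toReal_nonneg
    have hann : 0 ≤ a := ENNReal.toReal_nonneg
    have hdecomp : pk / u - qk = (pk - pB) / u + (pB - u * qB) / u + (qB - qk) := by
      field_simp
      ring
    have habs : |pk / u - qk| ≤ (pB - pk) / u + V / u + (qB - qk) := by
      rw [hdecomp]
      refine le_trans (abs_add_le _ _) ?_
      gcongr
      · refine le_trans (abs_add_le _ _) ?_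
        gcongr
        · rw [abs_div, abs_of_pos hu, abs_of_nonpos (by linarith), neg_sub]
        · rw [abs_div, abs_of_pos hu]
          gcongr
      · exact le_of_eq (abs_of_nonneg (by linarith))
    have hVdiv : V / u = 1 / u * V := by ring
    have h5 : (pB - pk) / u ≤ a / u := by gcongr; linarith
    linarith [habs, h5]
  · -- part (ii)
    have h : (μ 0 (hitBy T U N ∩ U)).toReal ≤ (μ 0 (hitBy T U N)).toReal :=
      ENNReal.toReal_mono (measure_ne_top _ _) (measure_mono inter_subset_left)
    exact (div_le_div_iff_of_pos_right hu).mpr h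
  · -- part (iii)
    have hle : μ 0 (hitBy T U N) ≤ ∑ i ∈ Finset.Icc 1 N, μ i U := by
      rw [hitBy_eq]
      refine le_trans (measure_biUnion_finset_le _ _) ?_
      refine Finset.sum_le_sum fun i _ => le_of_eq ?_
      rw [← hmap i, Measure.map_apply (seqComp_measurable hT i) hU]
    calc (μ 0 (hitBy T U N)).toReal ≤ (∑ i ∈ Finset.Icc 1 N, μ i U).toReal :=
          ENNReal.toReal_mono (ENNReal.sum_lt_top.mpr fun i _ => measure_lt_top _ _).ne hle
      _ = ∑ i ∈ Finset.Icc 1 N, (μ i U).toReal :=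
          ENNReal.toReal_sum fun i _ => measure_ne_top _ _
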